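/- For each a ∈ I with a > 0: β(u_0) = u_0, β(u_a) = u_a, and β(u_{−a}) = u_{−a} + (v^{L_0} − v^{−L_0})·u_a. Consequently, the ȷ-canonical basis of V_L is: b_{u_0} = u_0, b_{u_a} = u_a for a > 0, together with b_{u_{−a}} = u_{−a} if L_0 = 0, b_{u_{−a}} = u_{−a} + v^{L_0}·u_a if L_0 > 0, and b_{u_{−a}} = u_{−a} − v^{−L_0}·u_a if L_0 < 0; i.e. in each case b_{u_{−a}} is the unique β-invariant element of the form u_{−a} + (an element of v·ℤ[v]·u_a). -/

import Mathlib

attribute [local instance] Classical.propDecidable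

noncomputable section

/-- The field `ℚ(v)`. -/
abbrev Kv : Type := RatFunc ℚ

/-- The indeterminate `v`. -/
noncomputable def vv : Kv := RatFunc.X

/-- The index set `I = {-r, -r+1, ..., r}` of integers, as a subtype of `ℚ`. -/
def IIdx (r : ℕ) : Type := {a : ℚ // ∃ k : ℤ, -(r : ℤ) ≤ k ∧ k ≤ r ∧ a = (k : ℚ)}

instance (r : ℕ) : DecidableEq (IIdx r) := fun a b =>
  decidable_of_iff (a.1 = b.1) Subtype.ext_iff.symm

/-- Negation on the index set. -/
def IIdx.neg {r : ℕ} (a : IIdx r) : IIdx r :=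
  ⟨-a.1, by
    obtain ⟨k, h1, h2, h3⟩ := a.2
    exact ⟨-k, by omega, by omega, by rw [h3]; push_cast; ring⟩⟩

/-- The space `V_L`, the free `ℚ(v)`-module on `I`. -/
abbrev VL (r : ℕ) : Type := IIdx r →₀ Kv

/-- The basis vector `u_a`. -/
noncomputable def uv {r : ℕ} (a : IIdx r) : VL r := Finsupp.single a 1

/-- The Hecke operator `H_0` on `V_L` (odd case): `u_0 H_0 = v^{-L_0} u_0`,
`u_a H_0 = u_{-a}` if `a > 0`, and `u_a H_0 = u_{-a} + (v^{-L_0} - v^{L_0}) u_a` if `a < 0`. -/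
noncomputable def H0L (r : ℕ) (L0 : ℤ) : Module.End Kv (VL r) :=
  Finsupp.lift (VL r) Kv (IIdx r) (fun a =>
    if a.1 = 0 then (vv ^ (-L0)) • uv a
    else if 0 < a.1 then uv a.neg
    else uv a.neg + (vv ^ (-L0) - vv ^ L0) • uv a)

/-- The conditions characterizing the bar involution `β` on `V_L` (odd case). -/
def betaCondV (r : ℕ) (L0 : ℤ) (bar : Kv →+* Kv) (β : VL r →+ VL r) : Prop :=
  (∀ (c : Kv) (x : VL r), β (c • x) = bar c • β x) ∧
  (∀ a : IIdx r, 0 ≤ a.1 → β (uv a) = uv a) ∧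
  (∀ x : VL r, β (H0L r L0 x) = (H0L r L0 + (vv ^ L0 - vv ^ (-L0)) • 1) (β x))

/-- Membership in `v · ℤ[v] ⊆ ℚ(v)`. -/
def inVZv (c : Kv) : Prop :=
  ∃ P : Polynomial ℤ, c = algebraMap (Polynomial ℚ) Kv (Polynomial.X * P.map (Int.castRingHom ℚ))

/-- The ȷ-canonical basis vector attached to `u_{-a}` (`a > 0`). -/
noncomputable def canB (r : ℕ) (L0 : ℤ) (a : IIdx r) : VL r :=
  if 0 < L0 then uv a.neg + (vv ^ L0) • uv a
  else if L0 < 0 then uv a.neg - (vv ^ (-L0)) • uv a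
  else uv a.neg

open Polynomial

lemma vv_ne_zero : vv ≠ 0 := RatFunc.X_ne_zero

lemma alg_eq_eval₂ (g : Polynomial ℚ) :
    algebraMap (Polynomial ℚ) Kv g = Polynomial.eval₂ (algebraMap ℚ Kv) vv g := by
  induction g using Polynomial.induction_on' with
  | add p q hp hq => simp [hp, hq]
  | monomial n c =>
    rw [← Polynomial.C_mul_X_pow_eq_monomial, eval₂_mul, eval₂_C, eval₂_X_pow, map_mul, map_pow,
      RatFunc.algebraMap_C, RatFunc.algebraMap_X, vv, eq_ratCast RatFunc.C c, eq_ratCast (algebraMap ℚ Kv) c]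

lemma bar_alg (bar : Kv →+* Kv) (hbar : bar vv = vv⁻¹) (g : Polynomial ℚ) :
    bar (algebraMap (Polynomial ℚ) Kv g) = Polynomial.eval₂ (algebraMap ℚ Kv) vv⁻¹ g := by
  induction g using Polynomial.induction_on' with
  | add p q hp hq => simp [hp, hq]
  | monomial n c =>
    rw [← Polynomial.C_mul_X_pow_eq_monomial, eval₂_mul, eval₂_C, eval₂_X_pow, map_mul, map_pow,
      RatFunc.algebraMap_C, RatFunc.algebraMap_X]
    rw [map_mul, map_pow, show RatFunc.X = vv from rfl, hbar]
    congr 1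
    have h1 : (RatFunc.C : ℚ →+* Kv) c = ((c : ℚ) : Kv) := by
      rw [← RatFunc.algebraMap_eq_C]; exact eq_ratCast _ c
    rw [h1, map_ratCast, ← eq_ratCast (algebraMap ℚ Kv) c]

lemma natDegree_reflect_le {R : Type*} [Semiring R] (Q : R[X]) {n : ℕ} (h : Q.natDegree ≤ n) :
    (reflect n Q).natDegree ≤ n := by
  rw [natDegree_le_iff_coeff_eq_zero]
  intro N hN
  rw [coeff_reflect, revAt_eq_self_of_lt hN]
  exact coeff_eq_zero_of_natDegree_lt (lt_of_le_of_lt h hN)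

lemma inVZv_bar_fixed_eq_zero (bar : Kv →+* Kv) (hbar : bar vv = vv⁻¹) (d : Kv)
    (hd : inVZv d) (hfix : bar d = d) : d = 0 := by
  obtain ⟨P, rfl⟩ := hd
  set Q : Polynomial ℚ := P.map (Int.castRingHom ℚ) with hQ
  by_cases hQ0 : Q = 0
  · simp [hQ0]
  · exfalso
    set n := Q.natDegree with hn
    have hinv : Invertible (vv⁻¹) := invertibleOfNonzero (inv_ne_zero vv_ne_zero)
    have hinvOf : (⅟(vv⁻¹) : Kv) = vv := by
      rw [invOf_eq_inv, inv_inv]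
    have hrefl := Polynomial.eval₂_reflect_mul_pow (algebraMap ℚ Kv) (vv⁻¹) n Q le_rfl
    rw [hinvOf] at hrefl
    -- hrefl : eval₂ φ vv (reflect n Q) * (vv⁻¹)^n = eval₂ φ vv⁻¹ Q
    rw [bar_alg bar hbar, alg_eq_eval₂] at hfix
    rw [eval₂_mul, eval₂_mul, eval₂_X, eval₂_X, ← hrefl] at hfix
    -- hfix : vv⁻¹ * (eval₂ φ vv (reflect n Q) * (vv⁻¹)^n) = vv * eval₂ φ vv Q
    have hkey : Polynomial.eval₂ (algebraMap ℚ Kv) vv (reflect n Q)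
        = vv ^ (n + 2) * Polynomial.eval₂ (algebraMap ℚ Kv) vv Q := by
      have h2 := congrArg (· * vv ^ (n + 1)) hfix
      calc Polynomial.eval₂ (algebraMap ℚ Kv) vv (reflect n Q)
          = vv⁻¹ * (Polynomial.eval₂ (algebraMap ℚ Kv) vv (reflect n Q) * vv⁻¹ ^ n) *
            vv ^ (n + 1) := by
            have hvn : (vv : Kv) ^ n ≠ 0 := pow_ne_zero _ vv_ne_zero
            rw [inv_pow, pow_succ,
              show vv⁻¹ * (Polynomial.eval₂ (algebraMap ℚ Kv) vv (reflect n Q) * (vv ^ n)⁻¹) *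
                (vv ^ n * vv) = Polynomial.eval₂ (algebraMap ℚ Kv) vv (reflect n Q) *
                (vv⁻¹ * vv) * ((vv ^ n)⁻¹ * vv ^ n) from by ring,
              inv_mul_cancel₀ vv_ne_zero, inv_mul_cancel₀ hvn, mul_one, mul_one]
        _ = vv * Polynomial.eval₂ (algebraMap ℚ Kv) vv Q * vv ^ (n + 1) := h2
        _ = vv ^ (n + 2) * Polynomial.eval₂ (algebraMap ℚ Kv) vv Q := by ring
    rw [← alg_eq_eval₂, ← alg_eq_eval₂, show (vv : Kv) = algebraMap (Polynomial ℚ) Kv X from rfl,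
      ← map_pow, ← map_mul] at hkey
    have heq : reflect n Q = X ^ (n + 2) * Q := RatFunc.algebraMap_injective ℚ hkey
    have h1 : (reflect n Q).natDegree ≤ n := natDegree_reflect_le Q le_rfl
    rw [heq, natDegree_mul (pow_ne_zero _ X_ne_zero) hQ0, natDegree_pow, natDegree_X] at h1
    omega


lemma H0_uv {r : ℕ} (L0 : ℤ) (a : IIdx r) :
    H0L r L0 (uv a) = if a.1 = 0 then (vv ^ (-L0)) • uv a
      else if 0 < a.1 then uv a.neg
      else uv a.neg + (vv ^ (-L0) - vv ^ L0) • uv a := by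
  show H0L r L0 (Finsupp.single a 1) = _
  rw [H0L, Finsupp.lift_apply, Finsupp.sum_single_index (by simp), one_smul]

lemma inVZv_zpow (L0 : ℤ) (h : 0 < L0) : inVZv (vv ^ L0) := by
  refine ⟨Polynomial.X ^ (L0.toNat - 1), ?_⟩
  rw [Polynomial.map_pow, Polynomial.map_X, ← pow_succ']
  have h1 : L0.toNat - 1 + 1 = L0.toNat := by omega
  rw [h1, map_pow, show algebraMap (Polynomial ℚ) Kv Polynomial.X = vv from rfl,
    ← zpow_natCast, Int.toNat_of_nonneg h.le]

lemma inVZv_sub {c d : Kv} (hc : inVZv c) (hd : inVZv d) : inVZv (c - d) := by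
  obtain ⟨P, rfl⟩ := hc
  obtain ⟨P2, rfl⟩ := hd
  exact ⟨P - P2, by rw [← map_sub, ← mul_sub, ← Polynomial.map_sub]⟩

lemma inVZv_zero : inVZv (0 : Kv) := ⟨0, by simp⟩

lemma inVZv_neg {c : Kv} (hc : inVZv c) : inVZv (-c) := by
  have := inVZv_sub inVZv_zero hc
  rwa [zero_sub] at this


/-- `β(u_0) = u_0`, and for `a > 0`, `β(u_a) = u_a` and
`β(u_{-a}) = u_{-a} + (v^{L_0} - v^{-L_0}) u_a`; the ȷ-canonical basis of `V_L` consists of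
`u_0`, the `u_a` (`a > 0`), and the elements `canB`, each of which is the unique `β`-invariant
element of the form `u_{-a} + (v ℤ[v])·u_a`. -/
theorem jCanonical_basis_V_odd (r : ℕ) (hr : 1 ≤ r) (L0 : ℤ)
    (bar : Kv →+* Kv) (hbar : bar vv = vv⁻¹)
    (β : VL r →+ VL r) (hβ : betaCondV r L0 bar β) :
    (∀ a : IIdx r, a.1 = 0 → β (uv a) = uv a) ∧
    ∀ a : IIdx r, 0 < a.1 →
      β (uv a) = uv a ∧
      β (uv a.neg) = uv a.neg + (vv ^ L0 - vv ^ (-L0)) • uv a ∧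
      β (canB r L0 a) = canB r L0 a ∧
      (∃ c : Kv, inVZv c ∧ canB r L0 a = uv a.neg + c • uv a) ∧
      (∀ y : VL r, β y = y → (∃ c : Kv, inVZv c ∧ y = uv a.neg + c • uv a) →
        y = canB r L0 a) := by
  obtain ⟨hsmul, hfixu, hH⟩ := hβ
  have barpow : ∀ n : ℤ, bar (vv ^ n) = vv ^ (-n) := fun n => by
    rw [map_zpow₀, hbar, inv_zpow, zpow_neg]
  refine ⟨fun a ha => hfixu a ha.ge, fun a ha => ?_⟩
  have hane : a.neg ≠ a := fun h => by
    have : -a.1 = a.1 := congrArg Subtype.val h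
    linarith
  have hβa : β (uv a) = uv a := hfixu a ha.le
  have hH0a : H0L r L0 (uv a) = uv a.neg := by
    rw [H0_uv, if_neg (by positivity), if_pos ha]
  have hβneg : β (uv a.neg) = uv a.neg + (vv ^ L0 - vv ^ (-L0)) • uv a := by
    have h1 := hH (uv a)
    rw [hH0a, hβa, LinearMap.add_apply, LinearMap.smul_apply, Module.End.one_apply, hH0a] at h1
    exact h1
  -- general form
  have hβgen : ∀ c : Kv, β (uv a.neg + c • uv a)
      = uv a.neg + ((vv ^ L0 - vv ^ (-L0)) + bar c) • uv a := by
    intro c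
    rw [map_add, hβneg, hsmul, hβa, add_smul, add_assoc]
  -- canB as u_{-a} + c0 • u_a
  set c0 : Kv := if 0 < L0 then vv ^ L0 else if L0 < 0 then -(vv ^ (-L0)) else 0 with hc0
  have hcanB : canB r L0 a = uv a.neg + c0 • uv a := by
    rw [canB, hc0]
    split_ifs <;> simp [sub_eq_add_neg, neg_smul]
  have hbarc0 : bar c0 = (vv ^ (-L0) - vv ^ L0) + c0 := by
    rw [hc0]
    split_ifs with h1 h2
    · rw [barpow]; ring
    · rw [map_neg, barpow]; ring
    · have : L0 = 0 := by omega
      simp [this]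
  have hcoeff : ∀ c1 c2 : Kv, uv a.neg + c1 • uv a = uv a.neg + c2 • uv a → c1 = c2 := by
    intro c1 c2 h
    have h2 := DFunLike.congr_fun h a
    simpa [uv, Finsupp.single_eq_of_ne hane] using h2
  have hβcan : β (canB r L0 a) = canB r L0 a := by
    rw [hcanB, hβgen, hbarc0, show (vv ^ L0 - vv ^ (-L0)) + ((vv ^ (-L0) - vv ^ L0) + c0) = c0
      from by ring]
  have hc0mem : inVZv c0 := by
    rw [hc0]
    split_ifs with h1 h2
    · exact inVZv_zpow L0 h1
    · exact inVZv_neg (inVZv_zpow (-L0) (by omega))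
    · exact inVZv_zero
  refine ⟨hβa, hβneg, hβcan, ⟨c0, hc0mem, hcanB⟩, ?_⟩
  rintro y hy ⟨c, hcmem, rfl⟩
  rw [hβgen] at hy
  have hc : (vv ^ L0 - vv ^ (-L0)) + bar c = c := hcoeff _ _ hy
  have hd : bar (c - c0) = c - c0 := by
    rw [map_sub, hbarc0]
    linear_combination hc
  have : c - c0 = 0 := inVZv_bar_fixed_eq_zero bar hbar _ (inVZv_sub hcmem hc0mem) hd
  rw [hcanB, sub_eq_zero.mp this]
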